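/- In the current-algebra setup, assume g is perfect (g = ⁅g,g⁆). Let V be a ℂ-vector space, γ a ℂ-bilinear map D × D → ℂ with γ(u,u) = 0 which is normalized (γ(j x 1, j y b) = 0 for all x,y ∈ g, b ∈ 𝒜), and let ρ : D →ₗ[ℂ] End_ℂ(V) be a projective representation with cocycle γ, i.e. ⁅ρ u, ρ v⁆ = ρ ⁅u,v⁆ + γ(u,v)·id_V for all u,v ∈ D. Then ⁅ρ e, ρ (j x a)⁆ = ρ (j x (δ a)) for all x ∈ g and a ∈ 𝒜. -/

import Mathlib

/-- Part 1° of Lemma 4.1 of the paper: for a perfect `g` and an admissible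
normalized projective `𝒟¹_g`-module `(V, ρ)` with cocycle `γ`,
`[ρ e, ρ (j x a)] = ρ (j x (δ a))`. -/
theorem projective_module_commutator_current
    (D : Type*) [LieRing D] [LieAlgebra ℂ D]
    (A : Type*) [CommRing A] [Algebra ℂ A]
    (g : Type*) [LieRing g] [LieAlgebra ℂ g]
    (hperf : ⁅(⊤ : LieIdeal ℂ g), (⊤ : LieIdeal ℂ g)⁆ = (⊤ : LieIdeal ℂ g))
    (j : g →ₗ[ℂ] A →ₗ[ℂ] D)
    (hj : ∀ (x y : g) (a b : A), ⁅j x a, j y b⁆ = j ⁅x, y⁆ (a * b))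
    (e : D) (δ : A →ₗ[ℂ] A) (hδ : δ 1 = 0)
    (he : ∀ (x : g) (a : A), ⁅e, j x a⁆ = j x (δ a))
    (V : Type*) [AddCommGroup V] [Module ℂ V]
    (γ : D →ₗ[ℂ] D →ₗ[ℂ] ℂ)
    (hγ_alt : ∀ u : D, γ u u = 0)
    (hγ_norm : ∀ (x y : g) (b : A), γ (j x 1) (j y b) = 0)
    (ρ : D →ₗ[ℂ] Module.End ℂ V)
    (hρ : ∀ u v : D, ⁅ρ u, ρ v⁆ = ρ ⁅u, v⁆ + γ u v • (1 : Module.End ℂ V)) :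
    ∀ (x : g) (a : A), ⁅ρ e, ρ (j x a)⁆ = ρ (j x (δ a)) := by
  intro x a
  -- cocycle identity (as endomorphisms), derived from Jacobi
  have co : ∀ u v w : D,
      γ u ⁅v, w⁆ • (1 : Module.End ℂ V) + γ v ⁅w, u⁆ • (1 : Module.End ℂ V)
        + γ w ⁅u, v⁆ • (1 : Module.End ℂ V) = 0 := by
    intro u v w
    letI : LieRing (Module.End ℂ V) := LieRing.ofAssociativeRing
    have A1 : ⁅ρ u, ⁅ρ v, ρ w⁆⁆ = ρ ⁅u, ⁅v, w⁆⁆ + γ u ⁅v, w⁆ • (1 : Module.End ℂ V) := by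
      rw [hρ v w, lie_add, hρ u ⁅v, w⁆]
      simp [lie_smul, Ring.lie_def]
    have A2 : ⁅ρ v, ⁅ρ w, ρ u⁆⁆ = ρ ⁅v, ⁅w, u⁆⁆ + γ v ⁅w, u⁆ • (1 : Module.End ℂ V) := by
      rw [hρ w u, lie_add, hρ v ⁅w, u⁆]
      simp [lie_smul, Ring.lie_def]
    have A3 : ⁅ρ w, ⁅ρ u, ρ v⁆⁆ = ρ ⁅w, ⁅u, v⁆⁆ + γ w ⁅u, v⁆ • (1 : Module.End ℂ V) := by
      rw [hρ u v, lie_add, hρ w ⁅u, v⁆]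
      simp [lie_smul, Ring.lie_def]
    have jac : ⁅ρ u, ⁅ρ v, ρ w⁆⁆ + ⁅ρ v, ⁅ρ w, ρ u⁆⁆ + ⁅ρ w, ⁅ρ u, ρ v⁆⁆ = 0 :=
      lie_jacobi (ρ u) (ρ v) (ρ w)
    have jacD : ⁅u, ⁅v, w⁆⁆ + ⁅v, ⁅w, u⁆⁆ + ⁅w, ⁅u, v⁆⁆ = 0 := lie_jacobi u v w
    rw [A1, A2, A3] at jac
    have : ρ (⁅u, ⁅v, w⁆⁆ + ⁅v, ⁅w, u⁆⁆ + ⁅w, ⁅u, v⁆⁆)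
        + (γ u ⁅v, w⁆ • (1 : Module.End ℂ V) + γ v ⁅w, u⁆ • (1 : Module.End ℂ V)
          + γ w ⁅u, v⁆ • (1 : Module.End ℂ V)) = 0 := by
      rw [map_add, map_add]; linear_combination (norm := abel) jac
    rw [jacD, map_zero, zero_add] at this
    exact this
  -- the key vanishing: γ e (j x a) • 1 = 0 for all x
  have key : γ e (j x a) • (1 : Module.End ℂ V) = 0 := by
    let L : g →ₗ[ℂ] Module.End ℂ V :=
      { toFun := fun y => γ e (j y a) • (1 : Module.End ℂ V)
        map_add' := by intro y z; simp [add_smul]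
        map_smul' := by intro c y; simp [smul_smul] }
    suffices hx : x ∈ LinearMap.ker L by
      simpa [L] using (LinearMap.mem_ker.mp hx)
    have hxmem : x ∈ (⁅(⊤ : LieIdeal ℂ g), (⊤ : LieIdeal ℂ g)⁆ : LieIdeal ℂ g) := by
      rw [hperf]; trivial
    have hspan := (LieSubmodule.lieIdeal_oper_eq_linear_span
      (R := ℂ) (L := g) (M := g) (I := ⊤) (N := ⊤))
    have hxmem' : x ∈ Submodule.span ℂ
        { m : g | ∃ (y : (⊤ : LieIdeal ℂ g)) (z : (⊤ : LieIdeal ℂ g)), ⁅(y : g), (z : g)⁆ = m } := by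
      rw [← hspan]; exact hxmem
    refine Submodule.span_le.mpr ?_ hxmem'
    rintro m ⟨⟨y, -⟩, ⟨z, -⟩, rfl⟩
    have hbr : j ⁅y, z⁆ a = ⁅j y 1, j z a⁆ := by rw [hj]; rw [one_mul]
    have hco := co e (j y 1) (j z a)
    have h2 : γ (j y 1) ⁅j z a, e⁆ = 0 := by
      rw [← lie_skew, map_neg, he z a, hγ_norm, neg_zero]
    have h3 : γ (j z a) ⁅e, j y 1⁆ = 0 := by
      rw [he y 1, hδ, map_zero, map_zero]
    rw [h2, h3] at hco
    simp only [zero_smul, add_zero] at hco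
    simp only [LinearMap.mem_ker]
    show γ e (j ⁅y, z⁆ a) • (1 : Module.End ℂ V) = 0
    rw [hbr]; exact hco
  rw [hρ, he, key, add_zero]
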